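/- Every graph homomorphism a from the box F_n = {−n,…,n}^d (with the induced Cayley graph structure of Z^d) to a finite graph H extends to a graph homomorphism â from F_{2nd} to H such that â restricted to F_n equals a, and the restriction of â to the boundary F_{2nd} \ F_{2nd−1} takes at most two values w₀, w₁ (with (w₀,w₁) an edge of H), determined by the parity of the coordinate sum. -/

import Mathlib

/-- Adjacency in the standard Cayley graph of `ℤ^d`: ℓ¹-distance one. -/
def adjZ {d : ℕ} (i j : Fin d → ℤ) : Prop := (∑ t, |i t - j t|) = 1

/-- The box `F_n = {−n,…,n}^d`. -/
def boxF {d : ℕ} (n : ℕ) : Set (Fin d → ℤ) := {i | ∀ t, |i t| ≤ (n : ℤ)}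

/-- clamped magnitude -/
def zcA (n : ℕ) (x : ℤ) : ℤ := min |x| (n:ℤ)
/-- excess magnitude -/
def zeX (n : ℕ) (x : ℤ) : ℤ := max (|x| - (n:ℤ)) 0
/-- cut function -/
def zfc (k u : ℤ) : ℤ := max (u - k) 0
/-- prefix sums of clamped magnitudes -/
def zSp {d : ℕ} (n : ℕ) (i : Fin d → ℤ) (t : ℕ) : ℤ :=
  ∑ s : Fin d, if (s:ℕ) < t then zcA n (i s) else 0
/-- total excess -/
def zkT {d : ℕ} (n : ℕ) (i : Fin d → ℤ) : ℤ := ∑ s, zeX n (i s)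
/-- core folding map -/
def zcore {d : ℕ} (n : ℕ) (k : ℤ) (i : Fin d → ℤ) : Fin d → ℤ :=
  fun t => (i t).sign * (zfc k (zSp n i ((t:ℕ)+1)) - zfc k (zSp n i (t:ℕ)))
/-- bounce point -/
def zbnc (d : ℕ) (r : ℤ) : Fin d → ℤ := fun t => if r % 2 = 1 ∧ (t:ℕ) = 0 then 1 else 0
/-- the full folding map -/
def zPsi {d : ℕ} (n : ℕ) (i : Fin d → ℤ) : Fin d → ℤ :=
  if zSp n i d < zkT n i then zbnc d (zkT n i - zSp n i d) else zcore n (zkT n i) i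

lemma zcA_nonneg (n : ℕ) (x : ℤ) : 0 ≤ zcA n x := by
  simp only [zcA, Int.abs_eq_natAbs]; omega

lemma zcA_le (n : ℕ) (x : ℤ) : zcA n x ≤ n := by simp only [zcA]; omega

lemma zeX_nonneg (n : ℕ) (x : ℤ) : 0 ≤ zeX n x := by simp only [zeX]; omega

lemma zkT_nonneg {d : ℕ} (n : ℕ) (i : Fin d → ℤ) : 0 ≤ zkT n i :=
  Finset.sum_nonneg fun s _ => zeX_nonneg n (i s)

lemma zSp_zero {d : ℕ} (n : ℕ) (i : Fin d → ℤ) : zSp n i 0 = 0 := by simp [zSp]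

lemma zSp_mono {d : ℕ} (n : ℕ) (i : Fin d → ℤ) {t t' : ℕ} (h : t ≤ t') :
    zSp n i t ≤ zSp n i t' := by
  apply Finset.sum_le_sum
  intro s _
  by_cases h1 : (s:ℕ) < t
  · rw [if_pos h1, if_pos (lt_of_lt_of_le h1 h)]
  · rw [if_neg h1]
    split_ifs with h2
    · exact zcA_nonneg n _
    · exact le_rfl

lemma zSp_nonneg {d : ℕ} (n : ℕ) (i : Fin d → ℤ) (t : ℕ) : 0 ≤ zSp n i t := by
  rw [← zSp_zero (d := d) n i]; exact zSp_mono n i (Nat.zero_le t)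

lemma zSp_succ {d : ℕ} (n : ℕ) (i : Fin d → ℤ) (t : Fin d) :
    zSp n i ((t:ℕ)+1) = zSp n i (t:ℕ) + zcA n (i t) := by
  unfold zSp
  have h : ∀ s : Fin d, (if (s:ℕ) < (t:ℕ)+1 then zcA n (i s) else 0)
      = (if (s:ℕ) < (t:ℕ) then zcA n (i s) else 0) + (if s = t then zcA n (i s) else 0) := by
    intro s
    rcases lt_trichotomy (s:ℕ) (t:ℕ) with h|h|h
    · rw [if_pos (by omega), if_pos h, if_neg (by intro e; subst e; omega), add_zero]
    · have hst : s = t := Fin.ext h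
      subst hst
      rw [if_pos (by omega), if_neg (by omega), if_pos rfl, zero_add]
    · rw [if_neg (by omega), if_neg (by omega), if_neg (by intro e; subst e; omega), add_zero]
  rw [Finset.sum_congr rfl (fun s _ => h s), Finset.sum_add_distrib,
    Finset.sum_ite_eq' Finset.univ t, if_pos (Finset.mem_univ t)]

lemma zSp_top {d : ℕ} (n : ℕ) (i : Fin d → ℤ) : zSp n i d = ∑ s, zcA n (i s) :=
  Finset.sum_congr rfl fun s _ => if_pos s.isLt

lemma zcore_abs {d : ℕ} (n : ℕ) (k : ℤ) (i : Fin d → ℤ) (t : Fin d) :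
    |zcore n k i t| = zfc k (zSp n i ((t:ℕ)+1)) - zfc k (zSp n i (t:ℕ)) := by
  have hm := zSp_mono n i (show (t:ℕ) ≤ (t:ℕ)+1 by omega)
  have hD : 0 ≤ zfc k (zSp n i ((t:ℕ)+1)) - zfc k (zSp n i (t:ℕ)) := by
    simp only [zfc]; omega
  by_cases h0 : i t = 0
  · have he : zSp n i ((t:ℕ)+1) = zSp n i (t:ℕ) := by
      rw [zSp_succ]; simp [h0, zcA]
    simp [zcore, he, h0]
  · have hs : |(i t).sign| = 1 := by
      rcases lt_trichotomy (i t) 0 with h|h|h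
      · rw [Int.sign_eq_neg_one_of_neg h]; rfl
      · exact absurd h h0
      · rw [Int.sign_eq_one_of_pos h]; rfl
    rw [zcore, abs_mul, hs, one_mul, abs_of_nonneg hD]

lemma zcore_box {d : ℕ} (n : ℕ) (k : ℤ) (i : Fin d → ℤ) (t : Fin d) :
    |zcore n k i t| ≤ n := by
  rw [zcore_abs]
  have h1 := zSp_succ n i t
  have h2 := zcA_le n (i t)
  have h3 := zcA_nonneg n (i t)
  simp only [zfc]; omega

lemma zcore_eq_zero {d : ℕ} (n : ℕ) {k : ℤ} {i : Fin d → ℤ} (h : zSp n i d ≤ k) :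
    zcore n k i = 0 := by
  funext t
  have h1 : zSp n i ((t:ℕ)+1) ≤ zSp n i d := zSp_mono n i (by exact t.isLt)
  have h2 : zSp n i (t:ℕ) ≤ zSp n i d := zSp_mono n i (le_of_lt t.isLt)
  have h3 := zSp_nonneg n i (t:ℕ)
  have h4 := zSp_nonneg n i ((t:ℕ)+1)
  have : zfc k (zSp n i ((t:ℕ)+1)) = 0 ∧ zfc k (zSp n i (t:ℕ)) = 0 := by
    constructor <;> (simp only [zfc]; omega)
  simp [zcore, this.1, this.2]

lemma ztel {d : ℕ} (F : ℕ → ℤ) : ∑ t : Fin d, (F ((t:ℕ)+1) - F (t:ℕ)) = F d - F 0 := by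
  rw [Fin.sum_univ_eq_sum_range (fun t => F (t+1) - F t) d, Finset.sum_range_sub]

lemma zsum_abs_parity {d : ℕ} (f : Fin d → ℤ) :
    (∑ t, |f t|) % 2 = (∑ t, f t) % 2 := by
  rw [Finset.sum_int_mod, Finset.sum_int_mod Finset.univ 2 f]
  congr 1
  apply Finset.sum_congr rfl
  intro t _
  rw [Int.abs_eq_natAbs]; omega

lemma zsgn_abs_le (x : ℤ) : |x.sign| ≤ 1 := by
  rcases lt_trichotomy x 0 with h|h|h
  · rw [Int.sign_eq_neg_one_of_neg h]; norm_num
  · simp [h]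
  · rw [Int.sign_eq_one_of_pos h]; norm_num

lemma zcore_lip {d : ℕ} (n : ℕ) (k k' : ℤ) (i j : Fin d → ℤ)
    (hsgn : ∀ t : Fin d, i t = 0 ∨ j t = 0 ∨ (i t).sign = (j t).sign)
    (G : ℕ → ℤ) (hG : ∀ t, G t = zfc k' (zSp n j t) - zfc k (zSp n i t))
    (hmono : (∀ u v : ℕ, u ≤ v → G u ≤ G v) ∨ (∀ u v : ℕ, u ≤ v → G v ≤ G u))
    (hG0 : G 0 = 0) (hGd : |G d| ≤ 1) :
    ∑ t : Fin d, |zcore n k i t - zcore n k' j t| ≤ 1 := by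
  have key : ∀ t : Fin d, |zcore n k i t - zcore n k' j t| ≤ |G ((t:ℕ)+1) - G (t:ℕ)| := by
    intro t
    have hGdiff : G ((t:ℕ)+1) - G (t:ℕ)
        = (zfc k' (zSp n j ((t:ℕ)+1)) - zfc k' (zSp n j (t:ℕ)))
          - (zfc k (zSp n i ((t:ℕ)+1)) - zfc k (zSp n i (t:ℕ))) := by
      rw [hG, hG]; ring
    set A := zfc k (zSp n i ((t:ℕ)+1)) - zfc k (zSp n i (t:ℕ)) with hA
    set B := zfc k' (zSp n j ((t:ℕ)+1)) - zfc k' (zSp n j (t:ℕ)) with hB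
    have hmi := zSp_mono n i (show (t:ℕ) ≤ (t:ℕ)+1 by omega)
    have hmj := zSp_mono n j (show (t:ℕ) ≤ (t:ℕ)+1 by omega)
    have hAnn : 0 ≤ A := by rw [hA]; simp only [zfc]; omega
    have hBnn : 0 ≤ B := by rw [hB]; simp only [zfc]; omega
    have hci : zcore n k i t = (i t).sign * A := rfl
    have hcj : zcore n k' j t = (j t).sign * B := rfl
    rw [hGdiff, hci, hcj]
    rcases hsgn t with h0 | h0 | h0
    · have hA0 : A = 0 := by
        rw [hA, zSp_succ]; simp [h0, zcA]
      rw [hA0, h0]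
      simp only [Int.sign_zero, zero_mul, zero_sub, abs_neg, sub_zero]
      calc |(j t).sign * B| = |(j t).sign| * |B| := abs_mul _ _
        _ ≤ 1 * |B| := mul_le_mul_of_nonneg_right (zsgn_abs_le _) (abs_nonneg _)
        _ = |B| := one_mul _
    · have hB0 : B = 0 := by
        rw [hB, zSp_succ]; simp [h0, zcA]
      rw [hB0, h0]
      simp only [Int.sign_zero, zero_mul, sub_zero, zero_sub, abs_neg]
      calc |(i t).sign * A| = |(i t).sign| * |A| := abs_mul _ _
        _ ≤ 1 * |A| := mul_le_mul_of_nonneg_right (zsgn_abs_le _) (abs_nonneg _)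
        _ = |A| := one_mul _
    · calc |(i t).sign * A - (j t).sign * B| = |(j t).sign * (A - B)| := by rw [← h0]; ring_nf
        _ = |(j t).sign| * |A - B| := abs_mul _ _
        _ ≤ 1 * |A - B| := mul_le_mul_of_nonneg_right (zsgn_abs_le _) (abs_nonneg _)
        _ = |B - A| := by rw [one_mul, abs_sub_comm]
  calc ∑ t : Fin d, |zcore n k i t - zcore n k' j t|
      ≤ ∑ t : Fin d, |G ((t:ℕ)+1) - G (t:ℕ)| := Finset.sum_le_sum fun t _ => key t
    _ ≤ 1 := by
      rcases hmono with hm | hm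
      · have he : ∀ t : Fin d, |G ((t:ℕ)+1) - G (t:ℕ)| = G ((t:ℕ)+1) - G (t:ℕ) := fun t =>
          abs_of_nonneg (by have := hm (t:ℕ) ((t:ℕ)+1) (by omega); omega)
        rw [Finset.sum_congr rfl (fun t _ => he t), ztel, hG0, sub_zero]
        rw [abs_le] at hGd; exact hGd.2
      · have he : ∀ t : Fin d, |G ((t:ℕ)+1) - G (t:ℕ)| = -(G ((t:ℕ)+1) - G (t:ℕ)) := fun t =>
          abs_of_nonpos (by have := hm (t:ℕ) ((t:ℕ)+1) (by omega); omega)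
        rw [Finset.sum_congr rfl (fun t _ => he t)]
        calc ∑ t : Fin d, -(G ((t:ℕ)+1) - G (t:ℕ))
            = ∑ t : Fin d, ((fun u => -G u) ((t:ℕ)+1) - (fun u => -G u) (t:ℕ)) := by
              apply Finset.sum_congr rfl; intro t _; ring
          _ = -G d - -G 0 := by exact ztel (fun u => -G u)
          _ ≤ 1 := by rw [hG0]; rw [abs_le] at hGd; omega

lemma zadj_decomp {d : ℕ} {i j : Fin d → ℤ} (h : adjZ i j) :
    ∃ s : Fin d, |i s - j s| = 1 ∧ ∀ t, t ≠ s → i t = j t := by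
  have h1 : ∃ s : Fin d, i s ≠ j s := by
    by_contra hc
    push_neg at hc
    unfold adjZ at h
    rw [Finset.sum_congr rfl (fun t _ => by rw [hc t, sub_self, abs_zero])] at h
    simp at h
  obtain ⟨s, hs⟩ := h1
  have hsp := Finset.add_sum_erase Finset.univ (fun t => |i t - j t|) (Finset.mem_univ s)
  unfold adjZ at h
  have h' : |i s - j s| + ∑ t ∈ Finset.univ.erase s, |i t - j t| = 1 := by
    have := hsp.trans h
    simpa using this
  have hnn : 0 ≤ ∑ t ∈ Finset.univ.erase s, |i t - j t| :=
    Finset.sum_nonneg fun t _ => abs_nonneg _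
  have h1le : 1 ≤ |i s - j s| := Int.one_le_abs (sub_ne_zero.mpr hs)
  have heq : |i s - j s| = 1 := by omega
  have hzero : ∑ t ∈ Finset.univ.erase s, |i t - j t| = 0 := by omega
  refine ⟨s, heq, fun t ht => ?_⟩
  have := (Finset.sum_eq_zero_iff_of_nonneg fun t _ => abs_nonneg (i t - j t)).mp hzero t
    (Finset.mem_erase.mpr ⟨ht, Finset.mem_univ t⟩)
  have := abs_eq_zero.mp this
  omega

lemma zsgn_helper (x y : ℤ) (h : |x - y| = 1) : x = 0 ∨ y = 0 ∨ x.sign = y.sign := by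
  rcases lt_trichotomy x 0 with hx|hx|hx
  · rcases lt_trichotomy y 0 with hy|hy|hy
    · right; right; rw [Int.sign_eq_neg_one_of_neg hx, Int.sign_eq_neg_one_of_neg hy]
    · right; left; exact hy
    · exfalso; rw [Int.abs_eq_natAbs] at h; omega
  · left; exact hx
  · rcases lt_trichotomy y 0 with hy|hy|hy
    · exfalso; rw [Int.abs_eq_natAbs] at h; omega
    · right; left; exact hy
    · right; right; rw [Int.sign_eq_one_of_pos hx, Int.sign_eq_one_of_pos hy]

lemma zsum_ind {d : ℕ} (hd : 0 < d) : ∑ t : Fin d, (if (t:ℕ) = 0 then (1:ℤ) else 0) = 1 := by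
  have h : ∀ t : Fin d, (if (t:ℕ) = 0 then (1:ℤ) else 0) = (if t = ⟨0, hd⟩ then 1 else 0) := by
    intro t
    by_cases ht : t = ⟨0, hd⟩
    · subst ht; simp
    · rw [if_neg ht, if_neg (fun e => ht (Fin.ext e))]
  rw [Finset.sum_congr rfl (fun t _ => h t), Finset.sum_ite_eq' Finset.univ (⟨0, hd⟩ : Fin d),
    if_pos (Finset.mem_univ _)]

/-- difference of two "{0,1}-valued, supported on coordinate 0" vectors is small -/
lemma zbnc_diff {d : ℕ} (hd : 0 < d) (f g : Fin d → ℤ)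
    (hf : ∀ t, (f t = 0 ∨ f t = 1) ∧ ((t:ℕ) ≠ 0 → f t = 0))
    (hg : ∀ t, (g t = 0 ∨ g t = 1) ∧ ((t:ℕ) ≠ 0 → g t = 0)) :
    ∑ t : Fin d, |f t - g t| ≤ 1 := by
  calc ∑ t : Fin d, |f t - g t| ≤ ∑ t : Fin d, (if (t:ℕ) = 0 then (1:ℤ) else 0) := by
        apply Finset.sum_le_sum
        intro t _
        by_cases ht : (t:ℕ) = 0
        · rw [if_pos ht]
          have h1 := (hf t).1; have h2 := (hg t).1
          rw [Int.abs_eq_natAbs]; omega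
        · rw [if_neg ht, (hf t).2 ht, (hg t).2 ht]; simp
    _ = 1 := zsum_ind hd

lemma zbnc_props {d : ℕ} (r : ℤ) (t : Fin d) :
    (zbnc d r t = 0 ∨ zbnc d r t = 1) ∧ ((t:ℕ) ≠ 0 → zbnc d r t = 0) := by
  unfold zbnc
  constructor
  · split_ifs <;> simp
  · intro ht; rw [if_neg (fun hc => ht hc.2)]

lemma zSp_shift {d : ℕ} (n : ℕ) {i j : Fin d → ℤ} {s : Fin d}
    (hs2 : ∀ t, t ≠ s → i t = j t) (t : ℕ) :
    zSp n j t = zSp n i t + (if (s:ℕ) < t then zcA n (j s) - zcA n (i s) else 0) := by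
  unfold zSp
  have h : ∀ u : Fin d, (if (u:ℕ) < t then zcA n (j u) else 0)
      = (if (u:ℕ) < t then zcA n (i u) else 0)
        + (if u = s then (if (s:ℕ) < t then zcA n (j s) - zcA n (i s) else 0) else 0) := by
    intro u
    by_cases hu : u = s
    · subst hu
      by_cases hlt : (u:ℕ) < t
      · rw [if_pos hlt, if_pos hlt, if_pos rfl, if_pos hlt]; ring
      · rw [if_neg hlt, if_neg hlt, if_pos rfl, if_neg hlt]; ring
    · rw [← hs2 u hu, if_neg hu, add_zero]
  rw [Finset.sum_congr rfl (fun u _ => h u), Finset.sum_add_distrib,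
    Finset.sum_ite_eq' Finset.univ s, if_pos (Finset.mem_univ s)]

lemma zkT_shift {d : ℕ} (n : ℕ) {i j : Fin d → ℤ} {s : Fin d}
    (hs2 : ∀ t, t ≠ s → i t = j t) :
    zkT n j = zkT n i + (zeX n (j s) - zeX n (i s)) := by
  unfold zkT
  have h : ∀ u : Fin d, zeX n (j u)
      = zeX n (i u) + (if u = s then zeX n (j s) - zeX n (i s) else 0) := by
    intro u
    by_cases hu : u = s
    · subst hu; rw [if_pos rfl]; ring
    · rw [← hs2 u hu, if_neg hu, add_zero]
  rw [Finset.sum_congr rfl (fun u _ => h u), Finset.sum_add_distrib,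
    Finset.sum_ite_eq' Finset.univ s, if_pos (Finset.mem_univ s)]

lemma zPsi_lip {d : ℕ} (n : ℕ) (hd : 0 < d) {i j : Fin d → ℤ} (h : adjZ i j) :
    ∑ t : Fin d, |zPsi n i t - zPsi n j t| ≤ 1 := by
  obtain ⟨s, hs1, hs2⟩ := zadj_decomp h
  have hsgn : ∀ t : Fin d, i t = 0 ∨ j t = 0 ∨ (i t).sign = (j t).sign := by
    intro t
    by_cases ht : t = s
    · subst ht; exact zsgn_helper _ _ hs1
    · right; right; rw [hs2 t ht]
  have hSp := zSp_shift n hs2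
  have hkT := zkT_shift n hs2
  set ki := zkT n i with hki
  set kj := zkT n j with hkj
  set mi := zSp n i d with hmi
  set mj := zSp n j d with hmj
  have hki0 : 0 ≤ ki := zkT_nonneg n i
  have hkj0 : 0 ≤ kj := zkT_nonneg n j
  have hcase : (zcA n (i s) = zcA n (j s) ∧ (zeX n (i s) = zeX n (j s) + 1 ∨ zeX n (j s) = zeX n (i s) + 1))
      ∨ (zeX n (i s) = zeX n (j s) ∧ (zcA n (i s) = zcA n (j s) + 1 ∨ zcA n (j s) = zcA n (i s) + 1)) := by
    simp only [zcA, zeX, Int.abs_eq_natAbs] at hs1 ⊢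
    omega
  rcases hcase with ⟨hc, he⟩ | ⟨he, hc⟩
  · -- clamp equal at s : prefix sums agree, excess differs by one
    have hSpEq : ∀ t : ℕ, zSp n j t = zSp n i t := by
      intro t; rw [hSp t, hc]; simp
    have hmEq : mj = mi := hSpEq d
    have hkne : kj = ki + 1 ∨ ki = kj + 1 := by rw [hkT]; omega
    by_cases hbi : mi < ki <;> by_cases hbj : mj < kj
    · -- both bounce
      rw [zPsi, zPsi, if_pos hbi, if_pos hbj]
      apply zbnc_diff hd _ _ (fun t => zbnc_props _ t) (fun t => zbnc_props _ t)
    · -- i bounces, j core: then kj = mj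
      have hkjm : kj = mj := by omega
      rw [zPsi, zPsi, if_pos hbi, if_neg hbj, zcore_eq_zero _ (le_of_eq hkjm.symm)]
      apply zbnc_diff hd _ _ (fun t => zbnc_props _ t)
      intro t; simp
    · have hkim : ki = mi := by omega
      rw [zPsi, zPsi, if_neg hbi, if_pos hbj, zcore_eq_zero _ (le_of_eq hkim.symm)]
      apply zbnc_diff hd _ _ _ (fun t => zbnc_props _ t)
      intro t; simp
    · -- both core
      rw [zPsi, zPsi, if_neg hbi, if_neg hbj]
      apply zcore_lip n ki kj i j hsgn (fun t => zfc kj (zSp n j t) - zfc ki (zSp n i t))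
        (fun t => rfl)
      · rcases hkne with hk | hk
        · right
          intro u v huv
          have h1 := zSp_mono n i huv
          have h2 := hSpEq u; have h3 := hSpEq v
          simp only [zfc, hk]
          omega
        · left
          intro u v huv
          have h1 := zSp_mono n i huv
          have h2 := hSpEq u; have h3 := hSpEq v
          simp only [zfc, hk]
          omega
      · have h1 := zSp_zero n i; have h2 := zSp_zero n j
        simp only [zfc]; omega
      · have h2 := hSpEq d
        rcases hkne with hk | hk <;> (simp only [zfc, hk]; rw [abs_le]; omega)
  · -- excess equal at s : kT equal, prefix sums shift by δ = ±1 past s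
    have hkEq : kj = ki := by rw [hkT, he]; ring
    rcases hc with hc | hc
    · -- zcA n (i s) = zcA n (j s) + 1 : δ = -1
      have hSp' : ∀ t : ℕ, zSp n j t = zSp n i t + (if (s:ℕ) < t then -1 else 0) := by
        intro t; rw [hSp t, hc]; ring_nf
      have hmj' : mj = mi - 1 := by
        have := hSp' d
        rw [if_pos s.isLt] at this
        omega
      by_cases hbi : mi < ki <;> by_cases hbj : mj < kj
      · rw [zPsi, zPsi, if_pos hbi, if_pos hbj]
        apply zbnc_diff hd _ _ (fun t => zbnc_props _ t) (fun t => zbnc_props _ t)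
      · omega
      · -- ki ≤ mi, mj < kj : kj = ki, mj = mi - 1 so ki = mi, i core zero, j bounce
        have hkim : ki = mi := by omega
        rw [zPsi, zPsi, if_neg hbi, if_pos hbj, zcore_eq_zero _ (le_of_eq hkim.symm)]
        apply zbnc_diff hd _ _ _ (fun t => zbnc_props _ t)
        intro t; simp
      · rw [zPsi, zPsi, if_neg hbi, if_neg hbj]
        apply zcore_lip n ki kj i j hsgn (fun t => zfc kj (zSp n j t) - zfc ki (zSp n i t))
          (fun t => rfl)
        · right
          intro u v huv
          have h1 := zSp_mono n i huv
          have h2 := hSp' u; have h3 := hSp' v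
          have h4 : (if (s:ℕ) < u then (-1:ℤ) else 0) = -1 ∨ (if (s:ℕ) < u then (-1:ℤ) else 0) = 0 := by
            split_ifs <;> simp
          have h5 : (if (s:ℕ) < v then (-1:ℤ) else 0) = -1 ∨ (if (s:ℕ) < v then (-1:ℤ) else 0) = 0 := by
            split_ifs <;> simp
          have h6 : (if (s:ℕ) < u then (-1:ℤ) else 0) = -1 → (if (s:ℕ) < v then (-1:ℤ) else 0) = -1 := by
            intro hu
            by_cases hu' : (s:ℕ) < u
            · rw [if_pos (lt_of_lt_of_le hu' huv)]
            · rw [if_neg hu'] at hu; omega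
          simp only [zfc, hkEq] at *
          omega
        · have h1 := zSp_zero n i; have h2 := zSp_zero n j
          simp only [zfc]; omega
        · have h2 := hSp' d
          rw [if_pos s.isLt] at h2
          simp only [zfc, hkEq]; rw [abs_le]; omega
    · -- zcA n (j s) = zcA n (i s) + 1 : δ = +1
      have hSp' : ∀ t : ℕ, zSp n j t = zSp n i t + (if (s:ℕ) < t then 1 else 0) := by
        intro t; rw [hSp t, hc]; ring_nf
      have hmj' : mj = mi + 1 := by
        have := hSp' d
        rw [if_pos s.isLt] at this
        omega
      by_cases hbi : mi < ki <;> by_cases hbj : mj < kj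
      · rw [zPsi, zPsi, if_pos hbi, if_pos hbj]
        apply zbnc_diff hd _ _ (fun t => zbnc_props _ t) (fun t => zbnc_props _ t)
      · -- mi < ki, kj ≤ mj : kj = mj
        have hkjm : kj = mj := by omega
        rw [zPsi, zPsi, if_pos hbi, if_neg hbj, zcore_eq_zero _ (le_of_eq hkjm.symm)]
        apply zbnc_diff hd _ _ (fun t => zbnc_props _ t)
        intro t; simp
      · omega
      · rw [zPsi, zPsi, if_neg hbi, if_neg hbj]
        apply zcore_lip n ki kj i j hsgn (fun t => zfc kj (zSp n j t) - zfc ki (zSp n i t))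
          (fun t => rfl)
        · left
          intro u v huv
          have h1 := zSp_mono n i huv
          have h2 := hSp' u; have h3 := hSp' v
          have h4 : (if (s:ℕ) < u then (1:ℤ) else 0) = 1 ∨ (if (s:ℕ) < u then (1:ℤ) else 0) = 0 := by
            split_ifs <;> simp
          have h5 : (if (s:ℕ) < v then (1:ℤ) else 0) = 1 ∨ (if (s:ℕ) < v then (1:ℤ) else 0) = 0 := by
            split_ifs <;> simp
          have h6 : (if (s:ℕ) < u then (1:ℤ) else 0) = 1 → (if (s:ℕ) < v then (1:ℤ) else 0) = 1 := by
            intro hu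
            by_cases hu' : (s:ℕ) < u
            · rw [if_pos (lt_of_lt_of_le hu' huv)]
            · rw [if_neg hu'] at hu; omega
          simp only [zfc, hkEq] at *
          omega
        · have h1 := zSp_zero n i; have h2 := zSp_zero n j
          simp only [zfc]; omega
        · have h2 := hSp' d
          rw [if_pos s.isLt] at h2
          simp only [zfc, hkEq]; rw [abs_le]; omega

lemma zPsi_box {d : ℕ} (n : ℕ) (hn : 0 < n) (i : Fin d → ℤ) (t : Fin d) :
    |zPsi n i t| ≤ n := by
  unfold zPsi
  split_ifs with hb
  · unfold zbnc
    split_ifs <;> simp <;> omega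
  · exact zcore_box n _ i t

lemma zPsi_id {d : ℕ} (n : ℕ) {i : Fin d → ℤ} (hi : i ∈ boxF n) : zPsi n i = i := by
  have hex : ∀ t, zeX n (i t) = 0 := by
    intro t
    have := hi t
    simp only [zeX]
    omega
  have hk : zkT n i = 0 := by
    unfold zkT
    exact Finset.sum_eq_zero fun t _ => hex t
  unfold zPsi
  rw [hk, if_neg (by have := zSp_nonneg n i d; omega)]
  funext t
  have h1 := zSp_succ n i t
  have h2 := zSp_nonneg n i (t:ℕ)
  have h3 := zSp_nonneg n i ((t:ℕ)+1)
  have hca : zcA n (i t) = |i t| := by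
    have := hi t
    simp only [zcA]
    omega
  have : zfc 0 (zSp n i ((t:ℕ)+1)) - zfc 0 (zSp n i (t:ℕ)) = |i t| := by
    simp only [zfc]
    omega
  rw [zcore, this, Int.sign_mul_abs]

lemma zsum_bnc {d : ℕ} (hd : 0 < d) (r : ℤ) :
    ∑ t, zbnc d r t = if r % 2 = 1 then 1 else 0 := by
  by_cases hr : r % 2 = 1
  · rw [if_pos hr]
    rw [← zsum_ind hd]
    apply Finset.sum_congr rfl
    intro t _
    simp [zbnc, hr]
  · rw [if_neg hr]
    apply Finset.sum_eq_zero
    intro t _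
    simp [zbnc, hr]

lemma zdecomp_parity {d : ℕ} (n : ℕ) (i : Fin d → ℤ) :
    (∑ t, i t) % 2 = (zSp n i d + zkT n i) % 2 := by
  have h1 : zSp n i d + zkT n i = ∑ t, (zcA n (i t) + zeX n (i t)) := by
    rw [zSp_top, zkT, Finset.sum_add_distrib]
  have h2 : ∀ t : Fin d, zcA n (i t) + zeX n (i t) = |i t| := by
    intro t; simp only [zcA, zeX]; omega
  rw [h1, Finset.sum_congr rfl (fun t _ => h2 t), zsum_abs_parity]

lemma zPsi_parity {d : ℕ} (n : ℕ) (hd : 0 < d) (i : Fin d → ℤ) :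
    (∑ t, zPsi n i t) % 2 = (∑ t, i t) % 2 := by
  rw [zdecomp_parity n i]
  unfold zPsi
  split_ifs with hb
  · rw [zsum_bnc hd]
    have h0 := zkT_nonneg n i
    split_ifs with hr <;> omega
  · rw [← zsum_abs_parity]
    have h1 : ∀ t : Fin d, |zcore n (zkT n i) i t|
        = zfc (zkT n i) (zSp n i ((t:ℕ)+1)) - zfc (zkT n i) (zSp n i (t:ℕ)) :=
      zcore_abs n _ i
    rw [Finset.sum_congr rfl (fun t _ => h1 t)]
    have h5 := ztel (d:=d) (fun u => zfc (zkT n i) (zSp n i u))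
    rw [h5]
    have h2 := zSp_zero n i
    have h3 := zkT_nonneg n i
    have h4 := zSp_nonneg n i d
    simp only [zfc]
    omega

lemma zPsi_boundary {d n : ℕ} (hd : 0 < d) (hn : 0 < n) {i : Fin d → ℤ}
    (hin : ∀ t, |i t| ≤ 2*(n:ℤ)*d) {s : Fin d} (hs : 2*(n:ℤ)*d ≤ |i s|) :
    zPsi n i = if (∑ t, i t) % 2 = 0 then (0 : Fin d → ℤ)
      else (fun t => if (t:ℕ) = 0 then 1 else 0) := by
  have hnd : (n:ℤ) ≤ (n:ℤ)*(d:ℤ) := by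
    have h1 : (1:ℤ) ≤ (d:ℤ) := by exact_mod_cast hd
    nlinarith [Int.ofNat_nonneg n]
  have hmk : zSp n i d ≤ zkT n i := by
    have hlow : ∀ t : Fin d, (if t = s then 2*(n:ℤ)*d - 2*n else -(n:ℤ))
        ≤ zeX n (i t) - zcA n (i t) := by
      intro t
      by_cases ht : t = s
      · subst ht
        rw [if_pos rfl]
        have h1 := hin t
        simp only [zeX, zcA]
        omega
      · rw [if_neg ht]
        simp only [zeX, zcA]
        have := abs_nonneg (i t)
        omega
    have hsum : ∑ t : Fin d, (if t = s then 2*(n:ℤ)*d - 2*n else -(n:ℤ))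
        ≤ ∑ t : Fin d, (zeX n (i t) - zcA n (i t)) := Finset.sum_le_sum fun t _ => hlow t
    have hrhs : ∑ t : Fin d, (zeX n (i t) - zcA n (i t)) = zkT n i - zSp n i d := by
      rw [Finset.sum_sub_distrib, zSp_top, zkT]
    have hlhs : ∑ t : Fin d, (if t = s then 2*(n:ℤ)*d - 2*n else -(n:ℤ))
        = (2*(n:ℤ)*d - 2*n - (-(n:ℤ))) + (d:ℤ) * (-(n:ℤ)) := by
      have : ∀ t : Fin d, (if t = s then 2*(n:ℤ)*d - 2*n else -(n:ℤ))
          = (if t = s then 2*(n:ℤ)*d - 2*n - (-(n:ℤ)) else 0) + (-(n:ℤ)) := by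
        intro t; split_ifs <;> ring
      rw [Finset.sum_congr rfl (fun t _ => this t), Finset.sum_add_distrib,
        Finset.sum_ite_eq' Finset.univ s, if_pos (Finset.mem_univ s),
        Finset.sum_const, Finset.card_univ, Fintype.card_fin]
      push_cast
      ring
    rw [hrhs] at hsum
    rw [hlhs] at hsum
    nlinarith [hsum]
  have hpar : (∑ t, i t) % 2 = (zkT n i - zSp n i d) % 2 := by
    rw [zdecomp_parity n i]
    omega
  rcases lt_or_eq_of_le hmk with hlt | heq
  · rw [zPsi, if_pos hlt]
    funext t
    by_cases hr : (zkT n i - zSp n i d) % 2 = 1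
    · rw [if_neg (by omega)]
      simp [zbnc, hr]
    · rw [if_pos (by omega)]
      simp [zbnc, hr]
  · rw [zPsi, if_neg (by omega), zcore_eq_zero n (le_of_eq heq)]
    rw [if_pos (by omega)]

theorem stmt8 {V : Type*} [Fintype V] (Adj : V → V → Prop)
    (hsymm : ∀ u v, Adj u v → Adj v u)
    (d n : ℕ) (hd : 0 < d) (hn : 0 < n)
    (a : (Fin d → ℤ) → V)
    (ha : ∀ i ∈ boxF n, ∀ j ∈ boxF n, adjZ i j → Adj (a i) (a j)) :
    ∃ b : (Fin d → ℤ) → V,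
      (∀ i ∈ boxF (2 * n * d), ∀ j ∈ boxF (2 * n * d), adjZ i j → Adj (b i) (b j)) ∧
      (∀ i ∈ boxF n, b i = a i) ∧
      ∃ w₀ w₁ : V, Adj w₀ w₁ ∧
        ∀ i ∈ boxF (d := d) (2 * n * d) \ boxF (2 * n * d - 1),
          b i = if (∑ t, i t) % 2 = 0 then w₀ else w₁ := by
  refine ⟨fun i => a (zPsi n i), ?_, ?_, a 0, a (fun t => if (t:ℕ) = 0 then 1 else 0), ?_, ?_⟩
  · intro i _ j _ hadj
    have hbi : zPsi n i ∈ boxF n := fun t => zPsi_box n hn i t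
    have hbj : zPsi n j ∈ boxF n := fun t => zPsi_box n hn j t
    apply ha _ hbi _ hbj
    have hle := zPsi_lip n hd hadj
    have hnn : 0 ≤ ∑ t, |zPsi n i t - zPsi n j t| :=
      Finset.sum_nonneg fun t _ => abs_nonneg _
    have hpar : (∑ t, |zPsi n i t - zPsi n j t|) % 2 = 1 := by
      rw [zsum_abs_parity, Finset.sum_sub_distrib]
      have p1 := zPsi_parity n hd i
      have p2 := zPsi_parity n hd j
      have p3 : (∑ t, (i t - j t)) % 2 = 1 := by
        rw [← zsum_abs_parity]
        unfold adjZ at hadj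
        omega
      rw [Finset.sum_sub_distrib] at p3
      omega
    unfold adjZ
    omega
  · intro i hi
    simp only
    rw [zPsi_id n hi]
  · apply ha
    · intro t
      simp only [Pi.zero_apply, abs_zero]
      exact_mod_cast Nat.zero_le n
    · intro t
      simp only
      split_ifs <;> simp <;> omega
    · unfold adjZ
      have heq : (∑ t : Fin d, |(0 : Fin d → ℤ) t - (fun t : Fin d => if (t:ℕ) = 0 then (1:ℤ) else 0) t|)
          = ∑ t : Fin d, (if (t:ℕ) = 0 then (1:ℤ) else 0) := by
        apply Finset.sum_congr rfl
        intro t _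
        simp only [Pi.zero_apply, zero_sub, abs_neg]
        split_ifs <;> simp
      rw [heq, zsum_ind hd]
  · intro i hi
    obtain ⟨hi1, hi2⟩ := hi
    have h0 : 0 < 2*n*d := by positivity
    have hcast : ((2*n*d - 1 : ℕ) : ℤ) = 2*(n:ℤ)*d - 1 := by
      rw [Nat.cast_sub (by omega)]
      push_cast
      ring
    have hin : ∀ t, |i t| ≤ 2*(n:ℤ)*d := by
      intro t
      have := hi1 t
      push_cast at this
      linarith
    have hs' : ∃ s : Fin d, 2*(n:ℤ)*d ≤ |i s| := by
      by_contra hc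
      push_neg at hc
      apply hi2
      intro t
      have := hc t
      rw [hcast]
      omega
    obtain ⟨s, hs⟩ := hs'
    simp only
    rw [zPsi_boundary hd hn hin hs, apply_ite a]
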